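/- Theorem 1.C. Let β ∈ [0,1], n ∈ ℕ, and let Δ̲ : {k ∈ ℕ₀^({0,1}²) : k₊₊ = n} → [−1,1] be a lower β-confidence bound for the parameter q ↦ q₀₁ − q₁₀ in the multinomial model M (equivalently, for the corresponding parameters in P₂ and P_{2,≤}). If Δ̲ is an admissible lower β-confidence bound for one of the estimation problems (M, q ↦ q₀₁ − q₁₀) and (P₂, (π,χ) ↦ π₁·(χ^{(2)}_{1|1} − χ^{(1)}_{1|1}) − (1−π₁)·(χ^{(2)}_{0|0} − χ^{(1)}_{0|0})), then it is admissible for the other, and also for (P_{2,≤}, (π,χ) ↦ π₁·(χ^{(2)}_{1|1} − χ^{(1)}_{1|1})). -/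

import Mathlib

open scoped BigOperators

noncomputable section

/-- `p` is a discrete probability density on the finite set `X`,
i.e. a function `X → [0,1]` summing to `1`. -/
def IsProb {X : Type*} [Fintype X] (p : X → ℝ) : Prop :=
  (∀ x, 0 ≤ p x ∧ p x ≤ 1) ∧ ∑ x, p x = 1

/-- `χ` is a Markov transition density: `χ x` is a probability density for each `x`. -/
def IsMarkov {X Y : Type*} [Fintype Y] (χ : X → Y → ℝ) : Prop :=
  ∀ x, IsProb (χ x)

/-- The mixture density `μ₁(π,χ)` on `{0,1}` (indices: `χ i j = χ_{j|i}`). -/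
def mu1 (π : Fin 2 → ℝ) (χ : Fin 2 → Fin 2 → ℝ) : Fin 2 → ℝ :=
  fun j => ∑ i, π i * χ i j

/-- The mixture density `μ₂(π,χ)` on `{0,1}²` (indices: `χ i j = χ_{j|i}`). -/
def mu2 (π : Fin 2 → ℝ) (χ : Fin 2 → Fin 2 × Fin 2 → ℝ) : Fin 2 × Fin 2 → ℝ :=
  fun j => ∑ i, π i * χ i j

/-- First-test characteristic: `chi1 χ i ι = χ^{(1)}_{ι|i} = χ_{ι0|i} + χ_{ι1|i}`. -/
def chi1 (χ : Fin 2 → Fin 2 × Fin 2 → ℝ) : Fin 2 → Fin 2 → ℝ :=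
  fun i ι => χ i (ι, 0) + χ i (ι, 1)

/-- Second-test characteristic: `chi2 χ i ι = χ^{(2)}_{ι|i} = χ_{0ι|i} + χ_{1ι|i}`. -/
def chi2 (χ : Fin 2 → Fin 2 × Fin 2 → ℝ) : Fin 2 → Fin 2 → ℝ :=
  fun i ι => χ i (0, ι) + χ i (1, ι)

/-- The multinomial point mass `M_{n,q}({k}) = n! ∏_x q_x^{k_x}/k_x!`. -/
def mPMF {X : Type*} [Fintype X] (n : ℕ) (q : X → ℝ) (k : X → ℕ) : ℝ :=
  (n.factorial : ℝ) * ∏ x, q x ^ k x / ((k x).factorial : ℝ)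

/-- `mProb n q S` is the probability, under the multinomial distribution `M_{n,q}`
(supported on `{k : Σ_x k_x = n}`), of the event `S`. -/
def mProb {X : Type*} [Fintype X] (n : ℕ) (q : X → ℝ) (S : Set (X → ℕ)) : ℝ :=
  ∑' k : X → ℕ, Set.indicator {k | (∑ x, k x) = n ∧ k ∈ S} (mPMF n q) k


/-- The parameter `q ↦ q₀₁ - q₁₀` in the multinomial model. -/
def kapM (q : Fin 2 × Fin 2 → ℝ) : ℝ := q (0, 1) - q (1, 0)

/-- The parameter `(π,χ) ↦ π₁(Se₂-Se₁) - (1-π₁)(Sp₂-Sp₁)` in the full latent class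
model. -/
def kapF (π : Fin 2 → ℝ) (χ : Fin 2 → Fin 2 × Fin 2 → ℝ) : ℝ :=
  π 1 * (chi2 χ 1 1 - chi1 χ 1 1) - (1 - π 1) * (chi2 χ 0 0 - chi1 χ 0 0)

/-- The parameter `(π,χ) ↦ π₁(Se₂-Se₁)` in the restricted latent class model. -/
def kapR (π : Fin 2 → ℝ) (χ : Fin 2 → Fin 2 × Fin 2 → ℝ) : ℝ :=
  π 1 * (chi2 χ 1 1 - chi1 χ 1 1)

/-- Lower β-confidence bound for `(M, kapM)`. -/
def LowerCBM (β : ℝ) (n : ℕ) (Δ : ((Fin 2 × Fin 2) → ℕ) → ℝ) : Prop :=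
  ∀ q : Fin 2 × Fin 2 → ℝ, IsProb q → β ≤ mProb n q {k | Δ k ≤ kapM q}

/-- Lower β-confidence bound for `(P₂, kapF)`. -/
def LowerCBF (β : ℝ) (n : ℕ) (Δ : ((Fin 2 × Fin 2) → ℕ) → ℝ) : Prop :=
  ∀ π : Fin 2 → ℝ, ∀ χ : Fin 2 → Fin 2 × Fin 2 → ℝ, IsProb π → IsMarkov χ →
    β ≤ mProb n (mu2 π χ) {k | Δ k ≤ kapF π χ}

/-- Lower β-confidence bound for `(P₂≤, kapR)`. -/
def LowerCBR (β : ℝ) (n : ℕ) (Δ : ((Fin 2 × Fin 2) → ℕ) → ℝ) : Prop :=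
  ∀ π : Fin 2 → ℝ, ∀ χ : Fin 2 → Fin 2 × Fin 2 → ℝ, IsProb π → IsMarkov χ →
    chi1 χ 0 0 ≤ chi2 χ 0 0 →
    β ≤ mProb n (mu2 π χ) {k | Δ k ≤ kapR π χ}

/-- `Δ` is worse than `Δ'` for `(M, kapM)`. -/
def WorseM (n : ℕ) (Δ Δ' : ((Fin 2 × Fin 2) → ℕ) → ℝ) : Prop :=
  ∀ q : Fin 2 × Fin 2 → ℝ, IsProb q → ∀ t : ℝ, t < kapM q →
    mProb n q {k | t ≤ Δ k} ≤ mProb n q {k | t ≤ Δ' k}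

/-- `Δ` is strictly worse than `Δ'` for `(M, kapM)`. -/
def StrictlyWorseM (n : ℕ) (Δ Δ' : ((Fin 2 × Fin 2) → ℕ) → ℝ) : Prop :=
  WorseM n Δ Δ' ∧ ∃ q : Fin 2 × Fin 2 → ℝ, IsProb q ∧ ∃ t : ℝ, t < kapM q ∧
    mProb n q {k | t ≤ Δ k} < mProb n q {k | t ≤ Δ' k}

/-- `Δ` is worse than `Δ'` for `(P₂, kapF)`. -/
def WorseF (n : ℕ) (Δ Δ' : ((Fin 2 × Fin 2) → ℕ) → ℝ) : Prop :=
  ∀ π : Fin 2 → ℝ, ∀ χ : Fin 2 → Fin 2 × Fin 2 → ℝ, IsProb π → IsMarkov χ →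
    ∀ t : ℝ, t < kapF π χ →
      mProb n (mu2 π χ) {k | t ≤ Δ k} ≤ mProb n (mu2 π χ) {k | t ≤ Δ' k}

/-- `Δ` is strictly worse than `Δ'` for `(P₂, kapF)`. -/
def StrictlyWorseF (n : ℕ) (Δ Δ' : ((Fin 2 × Fin 2) → ℕ) → ℝ) : Prop :=
  WorseF n Δ Δ' ∧ ∃ π : Fin 2 → ℝ, ∃ χ : Fin 2 → Fin 2 × Fin 2 → ℝ,
    IsProb π ∧ IsMarkov χ ∧ ∃ t : ℝ, t < kapF π χ ∧
      mProb n (mu2 π χ) {k | t ≤ Δ k} < mProb n (mu2 π χ) {k | t ≤ Δ' k}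

/-- `Δ` is worse than `Δ'` for `(P₂≤, kapR)`. -/
def WorseR (n : ℕ) (Δ Δ' : ((Fin 2 × Fin 2) → ℕ) → ℝ) : Prop :=
  ∀ π : Fin 2 → ℝ, ∀ χ : Fin 2 → Fin 2 × Fin 2 → ℝ, IsProb π → IsMarkov χ →
    chi1 χ 0 0 ≤ chi2 χ 0 0 → ∀ t : ℝ, t < kapR π χ →
      mProb n (mu2 π χ) {k | t ≤ Δ k} ≤ mProb n (mu2 π χ) {k | t ≤ Δ' k}

/-- `Δ` is strictly worse than `Δ'` for `(P₂≤, kapR)`. -/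
def StrictlyWorseR (n : ℕ) (Δ Δ' : ((Fin 2 × Fin 2) → ℕ) → ℝ) : Prop :=
  WorseR n Δ Δ' ∧ ∃ π : Fin 2 → ℝ, ∃ χ : Fin 2 → Fin 2 × Fin 2 → ℝ,
    IsProb π ∧ IsMarkov χ ∧ chi1 χ 0 0 ≤ chi2 χ 0 0 ∧ ∃ t : ℝ, t < kapR π χ ∧
      mProb n (mu2 π χ) {k | t ≤ Δ k} < mProb n (mu2 π χ) {k | t ≤ Δ' k}

/-- Admissibility for `(M, kapM)`: `Δ` is a lower β-confidence bound and no lower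
β-confidence bound is strictly better. -/
def AdmissibleM (β : ℝ) (n : ℕ) (Δ : ((Fin 2 × Fin 2) → ℕ) → ℝ) : Prop :=
  LowerCBM β n Δ ∧ ¬ ∃ Δ' : ((Fin 2 × Fin 2) → ℕ) → ℝ,
    LowerCBM β n Δ' ∧ StrictlyWorseM n Δ Δ'

/-- Admissibility for `(P₂, kapF)`. -/
def AdmissibleF (β : ℝ) (n : ℕ) (Δ : ((Fin 2 × Fin 2) → ℕ) → ℝ) : Prop :=
  LowerCBF β n Δ ∧ ¬ ∃ Δ' : ((Fin 2 × Fin 2) → ℕ) → ℝ,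
    LowerCBF β n Δ' ∧ StrictlyWorseF n Δ Δ'

/-- Admissibility for `(P₂≤, kapR)`. -/
def AdmissibleR (β : ℝ) (n : ℕ) (Δ : ((Fin 2 × Fin 2) → ℕ) → ℝ) : Prop :=
  LowerCBR β n Δ ∧ ¬ ∃ Δ' : ((Fin 2 × Fin 2) → ℕ) → ℝ,
    LowerCBR β n Δ' ∧ StrictlyWorseR n Δ Δ'

-- ====== auxiliary lemmas ======


def kset (n : ℕ) : Finset ((Fin 2 × Fin 2) → ℕ) :=
  (Finset.univ : Finset ((Fin 2 × Fin 2) → Fin (n+1))).image (fun g x => (g x : ℕ))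

lemma mem_kset {n : ℕ} {k : (Fin 2 × Fin 2) → ℕ} (hk : (∑ x, k x) = n) : k ∈ kset n := by
  have hle : ∀ x, k x < n + 1 := by
    intro x
    have h := Finset.single_le_sum (f := k) (fun i _ => Nat.zero_le _) (Finset.mem_univ x)
    rw [hk] at h
    exact Nat.lt_succ_of_le h
  exact Finset.mem_image.2 ⟨fun x => ⟨k x, hle x⟩, Finset.mem_univ _, rfl⟩

lemma mProb_eq_sum (n : ℕ) (q : Fin 2 × Fin 2 → ℝ) (S : Set ((Fin 2 × Fin 2) → ℕ)) :
    mProb n q S = ∑ k ∈ kset n,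
      Set.indicator {k | (∑ x, k x) = n ∧ k ∈ S} (mPMF n q) k := by
  apply tsum_eq_sum
  intro k hk
  exact Set.indicator_of_notMem (fun h => hk (mem_kset h.1)) _

lemma mPMF_nonneg {n : ℕ} {q : Fin 2 × Fin 2 → ℝ} (hq : ∀ x, 0 ≤ q x)
    (k : (Fin 2 × Fin 2) → ℕ) : 0 ≤ mPMF n q k :=
  mul_nonneg (Nat.cast_nonneg _)
    (Finset.prod_nonneg fun x _ => div_nonneg (pow_nonneg (hq x) _) (Nat.cast_nonneg _))

lemma mProb_mono {n : ℕ} {q : Fin 2 × Fin 2 → ℝ} (hq : ∀ x, 0 ≤ q x)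
    {S T : Set ((Fin 2 × Fin 2) → ℕ)} (hST : S ⊆ T) : mProb n q S ≤ mProb n q T := by
  rw [mProb_eq_sum, mProb_eq_sum]
  refine Finset.sum_le_sum fun k _ => ?_
  have hsub : {k : (Fin 2 × Fin 2) → ℕ | (∑ x, k x) = n ∧ k ∈ S} ⊆
      {k | (∑ x, k x) = n ∧ k ∈ T} := fun k h => ⟨h.1, hST h.2⟩
  exact Set.indicator_le_indicator_of_subset hsub (fun a => mPMF_nonneg hq a) k

lemma exists_poly (n : ℕ) (a b : Fin 2 × Fin 2 → ℝ) (S : Set ((Fin 2 × Fin 2) → ℕ)) :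
    ∃ P : Polynomial ℝ, ∀ s : ℝ, P.eval s = mProb n (fun x => a x + s * b x) S := by
  classical
  refine ⟨∑ k ∈ kset n, if (∑ x, k x) = n ∧ k ∈ S then
      Polynomial.C (n.factorial : ℝ) *
        ∏ x, (Polynomial.C (a x) + Polynomial.C (b x) * Polynomial.X) ^ k x *
          Polynomial.C (((k x).factorial : ℝ))⁻¹ else 0, fun s => ?_⟩
  rw [mProb_eq_sum, Polynomial.eval_finset_sum]
  refine Finset.sum_congr rfl fun k _ => ?_
  by_cases h : (∑ x, k x) = n ∧ k ∈ S
  · have hm : k ∈ {k : (Fin 2 × Fin 2) → ℕ | (∑ x, k x) = n ∧ k ∈ S} := h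
    rw [if_pos h, Set.indicator_of_mem hm]
    simp only [mPMF, Polynomial.eval_mul, Polynomial.eval_prod, Polynomial.eval_pow,
      Polynomial.eval_add, Polynomial.eval_C, Polynomial.eval_X, div_eq_mul_inv]
    exact congrArg _ (Finset.prod_congr rfl fun x _ => by ring)
  · have hm : k ∉ {k : (Fin 2 × Fin 2) → ℕ | (∑ x, k x) = n ∧ k ∈ S} := h
    rw [if_neg h, Set.indicator_of_notMem hm]
    simp

lemma poly_zero_of_interval {P : Polynomial ℝ} {c : ℝ} (hc : 0 < c)
    (h : ∀ s ∈ Set.Ioo (0:ℝ) c, P.eval s = 0) : P = 0 :=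
  Polynomial.eq_zero_of_infinite_isRoot P
    ((Set.Ioo_infinite hc).mono fun s hs => h s hs)

lemma isProb_mu2 {π : Fin 2 → ℝ} {χ : Fin 2 → Fin 2 × Fin 2 → ℝ}
    (hπ : IsProb π) (hχ : IsMarkov χ) : IsProb (mu2 π χ) := by
  constructor
  · intro j
    constructor
    · exact Finset.sum_nonneg fun i _ => mul_nonneg (hπ.1 i).1 ((hχ i).1 j).1
    · calc ∑ i, π i * χ i j ≤ ∑ i, π i * 1 :=
          Finset.sum_le_sum fun i _ => mul_le_mul_of_nonneg_left ((hχ i).1 j).2 (hπ.1 i).1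
        _ = 1 := by simpa using hπ.2
  · calc ∑ j, mu2 π χ j = ∑ i, ∑ j, π i * χ i j := by
          simp only [mu2]; exact Finset.sum_comm
      _ = ∑ i, π i * ∑ j, χ i j := by simp [Finset.mul_sum]
      _ = ∑ i, π i := Finset.sum_congr rfl fun i _ => by rw [(hχ i).2, mul_one]
      _ = 1 := hπ.2

lemma kapF_eq {π : Fin 2 → ℝ} {χ : Fin 2 → Fin 2 × Fin 2 → ℝ} (hπ : IsProb π) :
    kapF π χ = kapM (mu2 π χ) := by
  have h : π 0 + π 1 = 1 := by simpa [Fin.sum_univ_two] using hπ.2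
  have hπ0 : π 0 = 1 - π 1 := by linarith
  simp only [kapF, kapM, mu2, chi1, chi2, Fin.sum_univ_two, hπ0]
  ring

lemma kapF_le_kapR {π : Fin 2 → ℝ} {χ : Fin 2 → Fin 2 × Fin 2 → ℝ}
    (hπ : IsProb π) (hcon : chi1 χ 0 0 ≤ chi2 χ 0 0) : kapF π χ ≤ kapR π χ := by
  have h1 : π 1 ≤ 1 := (hπ.1 1).2
  have := mul_nonneg (sub_nonneg.2 h1) (sub_nonneg.2 hcon)
  simp only [kapF, kapR]
  nlinarith [this]

lemma kapR_le_one {π : Fin 2 → ℝ} {χ : Fin 2 → Fin 2 × Fin 2 → ℝ}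
    (hπ : IsProb π) (hχ : IsMarkov χ) : kapR π χ ≤ 1 := by
  have hsum : χ 1 (0,0) + χ 1 (0,1) + (χ 1 (1,0) + χ 1 (1,1)) = 1 := by
    simpa [Fintype.sum_prod_type, Fin.sum_univ_two] using (hχ 1).2
  have h00 := ((hχ 1).1 (0,0)).1
  have h10 := ((hχ 1).1 (1,0)).1
  have h01 := ((hχ 1).1 (0,1)).1
  have h11 := ((hχ 1).1 (1,1)).1
  have hd : chi2 χ 1 1 - chi1 χ 1 1 ≤ 1 := by
    simp only [chi1, chi2]; linarith
  have hπ1 : 0 ≤ π 1 := (hπ.1 1).1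
  have hπ1' : π 1 ≤ 1 := (hπ.1 1).2
  calc kapR π χ = π 1 * (chi2 χ 1 1 - chi1 χ 1 1) := rfl
    _ ≤ π 1 * 1 := mul_le_mul_of_nonneg_left hd hπ1
    _ ≤ 1 := by linarith

-- embedding of M into the latent class models
def embPi : Fin 2 → ℝ := fun i => if i = 0 then 0 else 1

def embChi (q : Fin 2 × Fin 2 → ℝ) : Fin 2 → Fin 2 × Fin 2 → ℝ :=
  fun i => if i = 0 then (fun _ => 1/4) else q

lemma isProb_embPi : IsProb embPi := by
  constructor
  · intro i; fin_cases i <;> norm_num [embPi]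
  · simp [Fin.sum_univ_two, embPi]

lemma isMarkov_embChi {q : Fin 2 × Fin 2 → ℝ} (hq : IsProb q) : IsMarkov (embChi q) := by
  intro i
  fin_cases i
  · constructor
    · intro x; norm_num [embChi]
    · norm_num [embChi, Fintype.sum_prod_type, Fin.sum_univ_two]
  · simpa [embChi] using hq

lemma mu2_emb (q : Fin 2 × Fin 2 → ℝ) : mu2 embPi (embChi q) = q := by
  funext j
  simp [mu2, Fin.sum_univ_two, embPi, embChi]

lemma kapF_emb (q : Fin 2 × Fin 2 → ℝ) : kapF embPi (embChi q) = kapM q := by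
  simp only [kapF, kapM, chi1, chi2, embPi, embChi]
  norm_num

lemma kapR_emb (q : Fin 2 × Fin 2 → ℝ) : kapR embPi (embChi q) = kapM q := by
  simp only [kapR, kapM, chi1, chi2, embPi, embChi]
  norm_num

lemma con_emb (q : Fin 2 × Fin 2 → ℝ) : chi1 (embChi q) 0 0 ≤ chi2 (embChi q) 0 0 := by
  simp [chi1, chi2, embChi]




lemma lowerCBF_of_M {β : ℝ} {n : ℕ} {Δ : ((Fin 2 × Fin 2) → ℕ) → ℝ}
    (h : LowerCBM β n Δ) : LowerCBF β n Δ := by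
  intro π χ hπ hχ
  rw [kapF_eq hπ]
  exact h (mu2 π χ) (isProb_mu2 hπ hχ)

lemma lowerCBM_of_F {β : ℝ} {n : ℕ} {Δ : ((Fin 2 × Fin 2) → ℕ) → ℝ}
    (h : LowerCBF β n Δ) : LowerCBM β n Δ := by
  intro q hq
  have := h embPi (embChi q) isProb_embPi (isMarkov_embChi hq)
  rwa [mu2_emb, kapF_emb] at this

lemma lowerCBM_of_R {β : ℝ} {n : ℕ} {Δ : ((Fin 2 × Fin 2) → ℕ) → ℝ}
    (h : LowerCBR β n Δ) : LowerCBM β n Δ := by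
  intro q hq
  have := h embPi (embChi q) isProb_embPi (isMarkov_embChi hq) (con_emb q)
  rwa [mu2_emb, kapR_emb] at this

lemma lowerCBR_of_M {β : ℝ} {n : ℕ} {Δ : ((Fin 2 × Fin 2) → ℕ) → ℝ}
    (h : LowerCBM β n Δ) : LowerCBR β n Δ := by
  intro π χ hπ hχ hcon
  refine le_trans (h (mu2 π χ) (isProb_mu2 hπ hχ)) (mProb_mono
    (fun x => ((isProb_mu2 hπ hχ).1 x).1) ?_)
  intro k hk
  have hk' : Δ k ≤ kapM (mu2 π χ) := hk
  have : kapM (mu2 π χ) ≤ kapR π χ := by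
    rw [← kapF_eq hπ]; exact kapF_le_kapR hπ hcon
  exact le_trans hk' this

lemma worseF_of_M {n : ℕ} {Δ Δ' : ((Fin 2 × Fin 2) → ℕ) → ℝ}
    (h : WorseM n Δ Δ') : WorseF n Δ Δ' := by
  intro π χ hπ hχ t ht
  rw [kapF_eq hπ] at ht
  exact h (mu2 π χ) (isProb_mu2 hπ hχ) t ht

lemma worseM_of_F {n : ℕ} {Δ Δ' : ((Fin 2 × Fin 2) → ℕ) → ℝ}
    (h : WorseF n Δ Δ') : WorseM n Δ Δ' := by
  intro q hq t ht
  have := h embPi (embChi q) isProb_embPi (isMarkov_embChi hq) t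
    (by rw [kapF_emb]; exact ht)
  rwa [mu2_emb] at this

lemma worseM_of_R {n : ℕ} {Δ Δ' : ((Fin 2 × Fin 2) → ℕ) → ℝ}
    (h : WorseR n Δ Δ') : WorseM n Δ Δ' := by
  intro q hq t ht
  have := h embPi (embChi q) isProb_embPi (isMarkov_embChi hq) (con_emb q) t
    (by rw [kapR_emb]; exact ht)
  rwa [mu2_emb] at this

lemma strictlyWorseF_of_M {n : ℕ} {Δ Δ' : ((Fin 2 × Fin 2) → ℕ) → ℝ}
    (h : StrictlyWorseM n Δ Δ') : StrictlyWorseF n Δ Δ' := by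
  obtain ⟨hW, q, hq, t, ht, hlt⟩ := h
  refine ⟨worseF_of_M hW, embPi, embChi q, isProb_embPi, isMarkov_embChi hq, t, ?_, ?_⟩
  · rw [kapF_emb]; exact ht
  · rw [mu2_emb]; exact hlt

lemma strictlyWorseM_of_F {n : ℕ} {Δ Δ' : ((Fin 2 × Fin 2) → ℕ) → ℝ}
    (h : StrictlyWorseF n Δ Δ') : StrictlyWorseM n Δ Δ' := by
  obtain ⟨hW, π, χ, hπ, hχ, t, ht, hlt⟩ := h
  rw [kapF_eq hπ] at ht
  exact ⟨worseM_of_F hW, mu2 π χ, isProb_mu2 hπ hχ, t, ht, hlt⟩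

-- convex combination of probability vectors
lemma isProb_line {q1 q2 : Fin 2 × Fin 2 → ℝ} (h1 : IsProb q1) (h2 : IsProb q2)
    {s : ℝ} (hs : 0 ≤ s) (hs1 : s ≤ 1) : IsProb (fun x => q1 x + s * (q2 x - q1 x)) := by
  constructor
  · intro x
    have a1 := (h1.1 x).1; have a2 := (h1.1 x).2
    have b1 := (h2.1 x).1; have b2 := (h2.1 x).2
    refine ⟨?_, ?_⟩
    · show 0 ≤ q1 x + s * (q2 x - q1 x)
      nlinarith [mul_nonneg hs b1, mul_nonneg (sub_nonneg.2 hs1) a1]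
    · show q1 x + s * (q2 x - q1 x) ≤ 1
      nlinarith [mul_nonneg hs (sub_nonneg.2 b2), mul_nonneg (sub_nonneg.2 hs1) (sub_nonneg.2 a2)]
  · have : ∑ x, (q1 x + s * (q2 x - q1 x)) =
        (∑ x, q1 x) + s * ((∑ x, q2 x) - ∑ x, q1 x) := by
      rw [Finset.sum_add_distrib, ← Finset.mul_sum, Finset.sum_sub_distrib]
    rw [this, h1.2, h2.2]; ring

-- the key lemma: no strictly better bound in the restricted model
lemma admR_aux {β : ℝ} {n : ℕ} {Δ Δ' : ((Fin 2 × Fin 2) → ℕ) → ℝ}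
    (hAdmM : AdmissibleM β n Δ) (hcb' : LowerCBR β n Δ') (hsw : StrictlyWorseR n Δ Δ') :
    False := by
  obtain ⟨hW, πt, χt, hπt, hχt, hcon, t, ht, hstrict⟩ := hsw
  have hcbM' : LowerCBM β n Δ' := lowerCBM_of_R hcb'
  have hWM : WorseM n Δ Δ' := worseM_of_R hW
  -- on {q : t' < kapM q} the coverage probabilities of Δ and Δ' agree
  have hne : ∀ q : Fin 2 × Fin 2 → ℝ, IsProb q → ∀ t' : ℝ, t' < kapM q →
      mProb n q {k | t' ≤ Δ k} = mProb n q {k | t' ≤ Δ' k} := by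
    intro q hq t' ht'
    refine le_antisymm (hWM q hq t' ht') (not_lt.1 fun hlt => ?_)
    exact hAdmM.2 ⟨Δ', hcbM', hWM, q, hq, t', ht', hlt⟩
  set qt := mu2 πt χt with hqt_def
  have hqt : IsProb qt := isProb_mu2 hπt hχt
  have ht1 : t < 1 := lt_of_lt_of_le ht (kapR_le_one hπt hχt)
  -- a base point q* in the simplex with kapM q* > t
  set ε : ℝ := min ((1 - t)/8) (1/4) with hε_def
  have hε : 0 < ε := lt_min (by linarith) (by norm_num)
  have hε4 : ε ≤ 1/4 := min_le_right _ _
  set qs : Fin 2 × Fin 2 → ℝ := fun x => if x = (0, 1) then 1 - 3*ε else ε with hqs_def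
  have hqs : IsProb qs := by
    constructor
    · intro x
      by_cases hx : x = (0,1)
      · simp only [hqs_def]
        rw [if_pos hx]
        constructor <;> nlinarith
      · simp only [hqs_def]
        rw [if_neg hx]
        constructor <;> nlinarith
    · simp only [hqs_def]
      rw [Fintype.sum_prod_type]
      simp [Fin.sum_univ_two, Prod.ext_iff]
      ring
  have hkapqs : kapM qs = 1 - 4*ε := by
    simp only [kapM, hqs_def]
    norm_num [Prod.ext_iff]
    ring
  have hkaps : t < kapM qs := by
    rw [hkapqs]
    rcases le_total ((1 - t)/8) (1/4) with h | h
    · rw [hε_def, min_eq_left h]; linarith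
    · rw [hε_def, min_eq_right h]; linarith
  -- the line from qs to qt
  set b : Fin 2 × Fin 2 → ℝ := fun x => qt x - qs x with hb_def
  obtain ⟨P1, hP1⟩ := exists_poly n qs b {k | t ≤ Δ' k}
  obtain ⟨P2, hP2⟩ := exists_poly n qs b {k | t ≤ Δ k}
  set c : ℝ := kapM qt - kapM qs with hc_def
  have hdpos : (0:ℝ) < |c| + 1 := by positivity
  set s0 : ℝ := min 1 ((kapM qs - t)/(|c| + 1)) with hs0_def
  have hs0pos : 0 < s0 := lt_min one_pos (div_pos (by linarith) hdpos)
  have hkapline : ∀ s : ℝ, kapM (fun x => qs x + s * b x) = kapM qs + s * c := by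
    intro s; simp only [kapM, hb_def, hc_def]; ring
  have hzero : P1 - P2 = 0 := by
    apply poly_zero_of_interval hs0pos
    intro s hs
    have hs1 : s ≤ 1 := le_trans hs.2.le (min_le_left _ _)
    have hprob : IsProb (fun x => qs x + s * b x) := isProb_line hqs hqt hs.1.le hs1
    have hkap : t < kapM (fun x => qs x + s * b x) := by
      rw [hkapline]
      have hlt2 : s * (|c| + 1) < kapM qs - t := by
        have h1 : s < (kapM qs - t)/(|c| + 1) := lt_of_lt_of_le hs.2 (min_le_right _ _)
        calc s * (|c| + 1) < ((kapM qs - t)/(|c| + 1)) * (|c| + 1) :=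
              mul_lt_mul_of_pos_right h1 hdpos
          _ = kapM qs - t := div_mul_cancel₀ _ (ne_of_gt hdpos)
      have h2 : s * (-|c|) ≤ s * c := mul_le_mul_of_nonneg_left (neg_abs_le c) hs.1.le
      nlinarith [hlt2, h2, hs.1.le]
    have := hne _ hprob t hkap
    rw [Polynomial.eval_sub, hP1, hP2, this, sub_self]
  have hpt1 : (fun x => qs x + 1 * b x) = qt := by
    funext x; simp only [hb_def]; ring
  have : mProb n qt {k | t ≤ Δ' k} = mProb n qt {k | t ≤ Δ k} := by
    have h := congrArg (Polynomial.eval 1) hzero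
    rw [Polynomial.eval_sub, Polynomial.eval_zero, hP1, hP2, hpt1, sub_eq_zero] at h
    exact h
  rw [this] at hstrict
  exact lt_irrefl _ hstrict

/-- Theorem 1.C: if the lower β-confidence bound `Δ` is admissible for one of the
estimation problems `(M, q ↦ q₀₁ - q₁₀)` and `(P₂, kapF)`, then it is admissible for
the other, and also for `(P₂≤, kapR)`. -/
theorem stmt_2 (β : ℝ) (hβ : β ∈ Set.Icc (0:ℝ) 1) (n : ℕ) (hn : 0 < n)
    (Δ : ((Fin 2 × Fin 2) → ℕ) → ℝ)
    (hΔ : ∀ k, (∑ x, k x) = n → Δ k ∈ Set.Icc (-1:ℝ) 1)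
    (hcb : LowerCBM β n Δ) :
    (AdmissibleM β n Δ ∨ AdmissibleF β n Δ) →
      AdmissibleM β n Δ ∧ AdmissibleF β n Δ ∧ AdmissibleR β n Δ := by
  intro h
  have hM : AdmissibleM β n Δ := by
    rcases h with h | h
    · exact h
    · refine ⟨hcb, ?_⟩
      rintro ⟨Δ', hcb', hsw⟩
      exact h.2 ⟨Δ', lowerCBF_of_M hcb', strictlyWorseF_of_M hsw⟩
  refine ⟨hM, ⟨lowerCBF_of_M hcb, ?_⟩, ⟨lowerCBR_of_M hcb, ?_⟩⟩
  · rintro ⟨Δ', hcb', hsw⟩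
    exact hM.2 ⟨Δ', lowerCBM_of_F hcb', strictlyWorseM_of_F hsw⟩
  · rintro ⟨Δ', hcb', hsw⟩
    exact admR_aux hM hcb' hsw

end
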